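/- arXiv:2004.09983 — 2 statements merged into one kernel-verified Lean document; each statement's English description precedes it below -/
import Mathlib

section
/- Let (φ_t) and (φ̃_t) be non-elliptic semigroups in the unit disc 𝔻 with Koenigs functions h and h̃, total speed v(t) of (φ_t) and orthogonal speed ṽ^o(t) of (φ̃_t). If h(𝔻) ⊆ h̃(𝔻), then liminf_{t→+∞} [v(t) − ṽ^o(t)] > −∞. -/
open Complex Filter Topology Set MeasureTheory

noncomputable section

/-- The unit disc in the complex plane. -/
def unitDisc : Set ℂ := {z : ℂ | ‖z‖ < 1}

/-- The inverse hyperbolic tangent: `arctanh x = (1/2)·log((1+x)/(1−x))`. -/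
def arctanh (x : ℝ) : ℝ := (1 / 2) * Real.log ((1 + x) / (1 - x))

/-- The hyperbolic distance on the unit disc:
`k_𝔻(z,w) = arctanh |(z−w)/(1−conj(z)·w)|`. -/
def kD (z w : ℂ) : ℝ :=
  arctanh (‖(z - w) / (1 - (starRingEnd ℂ) z * w)‖)

/-- `φ` is a continuous one-parameter semigroup of holomorphic self-maps of the unit disc. -/
structure IsDiscSemigroup (φ : ℝ → ℂ → ℂ) : Prop where
  mapsTo : ∀ t : ℝ, 0 ≤ t → Set.MapsTo (φ t) unitDisc unitDisc
  holo : ∀ t : ℝ, 0 ≤ t → DifferentiableOn ℂ (φ t) unitDisc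
  id0 : ∀ z ∈ unitDisc, φ 0 z = z
  comp : ∀ s t : ℝ, 0 ≤ s → 0 ≤ t → ∀ z ∈ unitDisc, φ (t + s) z = φ t (φ s z)
  cont : ContinuousOn (fun p : ℝ × ℂ => φ p.1 p.2) (Set.Ici 0 ×ˢ unitDisc)

/-- A semigroup in the disc is non-elliptic if it has no fixed point in the disc
for positive times. -/
structure IsNonElliptic (φ : ℝ → ℂ → ℂ) extends IsDiscSemigroup φ : Prop where
  noFixedPoint : ∀ t : ℝ, 0 < t → ∀ z ∈ unitDisc, φ t z ≠ z

/-- `τ` is the Denjoy-Wolff point of the semigroup `φ`: a boundary point to which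
all orbits converge. -/
def IsDenjoyWolff (φ : ℝ → ℂ → ℂ) (τ : ℂ) : Prop :=
  ‖τ‖ = 1 ∧ ∀ z ∈ unitDisc, Tendsto (fun t => φ t z) atTop (𝓝 τ)

/-- `h` is a Koenigs function of the semigroup `φ`: univalent on the disc with
`h(φ_t(z)) = h(z) + it`. -/
def IsKoenigs (φ : ℝ → ℂ → ℂ) (h : ℂ → ℂ) : Prop :=
  DifferentiableOn ℂ h unitDisc ∧ Set.InjOn h unitDisc ∧
    ∀ t : ℝ, 0 ≤ t → ∀ z ∈ unitDisc, h (φ t z) = h z + Complex.I * t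

/-- `p` is the hyperbolic orthogonal projection onto the geodesic `(−1,1)·τ`:
for every `z` in the disc, `p z` lies on the geodesic and minimizes the hyperbolic
distance from `z` to the geodesic. -/
def IsOrthProjection (τ : ℂ) (p : ℂ → ℂ) : Prop :=
  ∀ z ∈ unitDisc,
    (∃ r : ℝ, r ∈ Set.Ioo (-1 : ℝ) 1 ∧ p z = (r : ℂ) * τ) ∧
    ∀ r : ℝ, r ∈ Set.Ioo (-1 : ℝ) 1 → kD z (p z) ≤ kD z ((r : ℂ) * τ)

/-- The total speed `v(t) = k_𝔻(0, φ_t(0))` of a semigroup. -/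
def totalSpeed (φ : ℝ → ℂ → ℂ) (t : ℝ) : ℝ := kD 0 (φ t 0)

/-- The orthogonal speed `v^o(t) = k_𝔻(0, π(φ_t(0)))` of a semigroup, relative to the
orthogonal projection `p` onto the geodesic `(−1,1)·τ`. -/
def orthSpeed (φ : ℝ → ℂ → ℂ) (p : ℂ → ℂ) (t : ℝ) : ℝ := kD 0 (p (φ t 0))

/-- `δ⁺(t)`: the truncated distance from `z₀ + it` to the part of the complement of `Ω`
lying to the right of the vertical line through `z₀`. -/
def deltaPlus (Ω : Set ℂ) (z₀ : ℂ) (t : ℝ) : ℝ :=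
  min t (sInf {d : ℝ | ∃ w : ℂ, w ∉ Ω ∧ z₀.re ≤ w.re ∧ d = ‖w - (z₀ + Complex.I * t)‖})

/-- `δ⁻(t)`: the truncated distance from `z₀ + it` to the part of the complement of `Ω`
lying to the left of the vertical line through `z₀`. -/
def deltaMinus (Ω : Set ℂ) (z₀ : ℂ) (t : ℝ) : ℝ :=
  min t (sInf {d : ℝ | ∃ w : ℂ, w ∉ Ω ∧ w.re ≤ z₀.re ∧ d = ‖w - (z₀ + Complex.I * t)‖})

/-- `Ω` is quasi-symmetric with respect to vertical axes. -/
def QuasiSymmetric (Ω : Set ℂ) : Prop :=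
  ∃ z₀ ∈ Ω, ∃ K : ℝ, 0 < K ∧ ∀ t : ℝ, 0 ≤ t →
    K⁻¹ * deltaMinus Ω z₀ t ≤ deltaPlus Ω z₀ t ∧ deltaPlus Ω z₀ t ≤ K * deltaMinus Ω z₀ t

/-- `Ω` is starlike with respect to `w₀`: every segment from `w₀` to a point of `Ω`
is contained in `Ω`. -/
def StarlikeWrt (Ω : Set ℂ) (w₀ : ℂ) : Prop :=
  ∀ w ∈ Ω, ∀ s : ℝ, s ∈ Set.Icc (0 : ℝ) 1 → (1 - (s : ℂ)) * w₀ + (s : ℂ) * w ∈ Ω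

/-- The orbit of `0` converges non-tangentially to `τ`:
`limsup_{t→+∞} |τ − φ_t(0)|/(1 − |φ_t(0)|) < +∞`. -/
def ConvergesNonTangentially (φ : ℝ → ℂ → ℂ) (τ : ℂ) : Prop :=
  Filter.limsup (fun t : ℝ =>
    ((‖τ - φ t 0‖ / (1 - ‖φ t 0‖) : ℝ) : EReal)) atTop < ⊤

/-- `f` is eventually non-decreasing. -/
def EventuallyNondecreasing (f : ℝ → ℝ) : Prop :=
  ∃ T : ℝ, ∀ s t : ℝ, T ≤ s → s ≤ t → f s ≤ f t

/-- The Cayley transform from the unit disc to the right half-plane. -/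
def cayley (z : ℂ) : ℂ := (1 + z) / (1 - z)

/-- The inverse Cayley transform, from the right half-plane to the unit disc. -/
def cayleyInv (w : ℂ) : ℂ := (w - 1) / (w + 1)

/-- `Θ_ρ := {iy : y ∈ ℝ, |y| ≥ ρ}`, a subset of the imaginary axis. -/
def Theta (ρ : ℝ) : Set ℂ := {z : ℂ | ∃ y : ℝ, z = Complex.I * (y : ℂ) ∧ ρ ≤ |y|}

/-- `Γ*_t := {iy : |y| ≥ inf_{u ≥ t} ρ_u}`. -/
def GammaStar (ρ : ℝ → ℝ) (t : ℝ) : Set ℂ :=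
  {z : ℂ | ∃ y : ℝ, z = Complex.I * (y : ℂ) ∧ sInf {r : ℝ | ∃ u : ℝ, t ≤ u ∧ r = ρ u} ≤ |y|}

/-- The harmonic measure at `w` (a point of the right half-plane) of a Borel subset `E`
of the imaginary axis, with respect to the right half-plane:
`ω(w,E,ℍ) = (1/π) ∫_{{s : is ∈ E}} Re w/((Re w)² + (Im w − s)²) ds`. -/
def omegaH (w : ℂ) (E : Set ℂ) : ℝ :=
  (1 / Real.pi) *
    ∫ s in {s : ℝ | Complex.I * (s : ℂ) ∈ E}, w.re / (w.re ^ 2 + (w.im - s) ^ 2)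

/-- The Euclidean arclength of the closed arc of the unit circle containing `1`
with endpoints `a` and `conj a` (where `Im a > 0`), namely `2·arg a`. -/
def arcLength (a : ℂ) : ℝ := 2 * Complex.arg a

/-- The harmonic measure at `0` with respect to the unit disc of the closed arc of the
unit circle containing `1` with endpoints `a` and `conj a`: `ℓ(A)/(2π)`. -/
def omegaDiscZero (a : ℂ) : ℝ := arcLength a / (2 * Real.pi)

/-- `Π_α := {z ∈ ℂ : Im z > |Re z|^α}`. -/
def PiDom (α : ℝ) : Set ℂ := {z : ℂ | |z.re| ^ α < z.im}

/-- `W(θ) := {z ≠ 0 : arg z ∈ (π/2 − θ, π/2)}`. -/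
def Wsector (θ : ℝ) : Set ℂ :=
  {z : ℂ | z ≠ 0 ∧ Complex.arg z ∈ Set.Ioo (Real.pi / 2 - θ) (Real.pi / 2)}

/-- `Ξ(α,θ) := ({Re z ≤ 0} ∩ Π_α) ∪ W(θ)`. -/
def Xi (α θ : ℝ) : Set ℂ := ({z : ℂ | z.re ≤ 0} ∩ PiDom α) ∪ Wsector θ

namespace Aux

lemma unitDisc_eq_ball : unitDisc = Metric.ball (0:ℂ) 1 := by
  ext z; simp [unitDisc, Metric.mem_ball, Complex.dist_eq]

lemma isOpen_unitDisc : IsOpen unitDisc := by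
  rw [unitDisc_eq_ball]; exact Metric.isOpen_ball

lemma zero_mem : (0:ℂ) ∈ unitDisc := by simp [unitDisc]

/-- pseudo-hyperbolic distance -/
def rho (z w : ℂ) : ℝ := ‖(z - w) / (1 - (starRingEnd ℂ) z * w)‖

lemma kD_eq (z w : ℂ) : kD z w = arctanh (rho z w) := rfl

lemma denom_ne_zero {z w : ℂ} (hz : ‖z‖ < 1) (hw : ‖w‖ < 1) :
    (1 : ℂ) - (starRingEnd ℂ) z * w ≠ 0 := by
  intro h
  have h1 : (1:ℂ) = (starRingEnd ℂ) z * w := by linear_combination h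
  have : ‖(starRingEnd ℂ) z * w‖ < 1 := by
    rw [norm_mul, Complex.norm_conj]
    calc ‖z‖ * ‖w‖ ≤ ‖z‖ * 1 :=
          mul_le_mul_of_nonneg_left hw.le (norm_nonneg z)
      _ < 1 := by simpa using hz
  rw [← h1] at this; simp at this

lemma rho_nonneg (z w : ℂ) : 0 ≤ rho z w := norm_nonneg _

lemma normSq_identity (z w : ℂ) :
    Complex.normSq (1 - (starRingEnd ℂ) z * w) - Complex.normSq (z - w)
      = (1 - Complex.normSq z) * (1 - Complex.normSq w) := by
  have h : ((Complex.normSq (1 - (starRingEnd ℂ) z * w) : ℂ) - (Complex.normSq (z - w) : ℂ))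
      = (1 - (Complex.normSq z : ℂ)) * (1 - (Complex.normSq w : ℂ)) := by
    rw [← Complex.mul_conj, ← Complex.mul_conj, ← Complex.mul_conj, ← Complex.mul_conj]
    simp only [map_sub, map_mul, map_one, Complex.conj_conj]
    ring
  exact_mod_cast h

lemma normSq_lt_one {z : ℂ} (hz : ‖z‖ < 1) : Complex.normSq z < 1 := by
  rw [← Complex.sq_norm]; nlinarith [norm_nonneg z]

lemma rho_lt_one {z w : ℂ} (hz : ‖z‖ < 1) (hw : ‖w‖ < 1) :
    rho z w < 1 := by
  have hident := normSq_identity z w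
  have h1 : Complex.normSq (z - w) < Complex.normSq (1 - (starRingEnd ℂ) z * w) := by
    nlinarith [normSq_lt_one hz, normSq_lt_one hw]
  have habs : ‖z - w‖ < ‖1 - (starRingEnd ℂ) z * w‖ := by
    rw [Complex.norm_def, Complex.norm_def]
    exact Real.sqrt_lt_sqrt (Complex.normSq_nonneg _) h1
  have hd0 : 0 < ‖1 - (starRingEnd ℂ) z * w‖ :=
    norm_pos_iff.mpr (denom_ne_zero hz hw)
  rw [rho, norm_div]
  exact (div_lt_one hd0).mpr habs

lemma rho_symm (z w : ℂ) : rho z w = rho w z := by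
  unfold rho
  rw [norm_div, norm_div, norm_sub_rev]
  congr 1
  rw [← Complex.norm_conj (1 - (starRingEnd ℂ) w * z)]
  congr 1
  simp only [map_sub, map_one, map_mul, Complex.conj_conj]
  ring

lemma kD_symm (z w : ℂ) : kD z w = kD w z := by rw [kD_eq, kD_eq, rho_symm]

lemma rho_zero_left (w : ℂ) : rho 0 w = ‖w‖ := by
  simp [rho]

lemma kD_zero_left (w : ℂ) : kD 0 w = arctanh (‖w‖) := by
  rw [kD_eq, rho_zero_left]

/-! ### arctanh lemmas -/

lemma arctanh_lt_arctanh {x y : ℝ} (hx : 0 ≤ x) (hxy : x < y) (hy : y < 1) :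
    arctanh x < arctanh y := by
  unfold arctanh
  have hx1 : x < 1 := lt_of_lt_of_le hxy hy.le
  have h1 : (0:ℝ) < (1 + x) / (1 - x) := by
    apply div_pos <;> linarith
  have h2 : (1 + x) / (1 - x) < (1 + y) / (1 - y) := by
    rw [div_lt_div_iff₀ (by linarith) (by linarith)]
    nlinarith
  have := Real.log_lt_log h1 h2
  linarith

lemma arctanh_le_arctanh {x y : ℝ} (hx : 0 ≤ x) (hxy : x ≤ y) (hy : y < 1) :
    arctanh x ≤ arctanh y := by
  rcases eq_or_lt_of_le hxy with h | h
  · rw [h]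
  · exact (arctanh_lt_arctanh hx h hy).le

lemma arctanh_add {x y : ℝ} (hx : 0 ≤ x) (hx1 : x < 1) (hy : 0 ≤ y) (hy1 : y < 1) :
    arctanh x + arctanh y = arctanh ((x + y) / (1 + x * y)) := by
  unfold arctanh
  have hxy : (0:ℝ) < 1 + x * y := by nlinarith
  have hA : (0:ℝ) < (1 + x) / (1 - x) := by apply div_pos <;> linarith
  have hB : (0:ℝ) < (1 + y) / (1 - y) := by apply div_pos <;> linarith
  have h1 : 1 + (x + y) / (1 + x * y) = ((1+x)*(1+y))/(1+x*y) := by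
    field_simp; ring
  have h2 : 1 - (x + y) / (1 + x * y) = ((1-x)*(1-y))/(1+x*y) := by
    field_simp; ring
  rw [h1, h2, div_div_div_comm, div_self hxy.ne', div_one,
    show ((1+x)*(1+y))/((1-x)*(1-y)) = ((1+x)/(1-x)) * ((1+y)/(1-y)) by
      rw [div_mul_div_comm],
    Real.log_mul hA.ne' hB.ne']
  ring

/-! ### base triangle inequality -/

lemma rho_le_base {a c : ℂ} (ha : ‖a‖ < 1) (hc : ‖c‖ < 1) :
    rho a c ≤ (‖a‖ + ‖c‖) / (1 + ‖a‖ * ‖c‖) := by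
  set p := ‖a‖ with hp
  set q := ‖c‖ with hq
  have hp0 : 0 ≤ p := norm_nonneg a
  have hq0 : 0 ≤ q := norm_nonneg c
  have hpq : (0:ℝ) < 1 + p * q := by nlinarith
  have hd0 : 0 < ‖1 - (starRingEnd ℂ) a * c‖ :=
    norm_pos_iff.mpr (denom_ne_zero ha hc)
  rw [rho, norm_div, div_le_div_iff₀ hd0 hpq]
  -- reduce to squared inequality
  have hs : -(p * q) ≤ (a * (starRingEnd ℂ) c).re := by
    have h1 : ‖a * (starRingEnd ℂ) c‖ = p * q := by
      rw [norm_mul, Complex.norm_conj]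
    have := Complex.abs_re_le_norm (a * (starRingEnd ℂ) c)
    rw [h1] at this
    have := abs_le.mp this
    linarith [this.1]
  have hnum : (‖a - c‖)^2 = p^2 + q^2 - 2 * (a * (starRingEnd ℂ) c).re := by
    rw [Complex.sq_norm, Complex.normSq_sub, hp, hq, Complex.sq_norm, Complex.sq_norm]
  have hden : (‖1 - (starRingEnd ℂ) a * c‖)^2
      = 1 + p^2 * q^2 - 2 * (a * (starRingEnd ℂ) c).re := by
    rw [Complex.sq_norm, Complex.normSq_sub]
    have h1 : Complex.normSq ((starRingEnd ℂ) a * c) = p^2 * q^2 := by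
      rw [Complex.normSq_mul, Complex.normSq_conj, ← Complex.sq_norm, ← Complex.sq_norm]
    have h2 : ((1:ℂ) * (starRingEnd ℂ) ((starRingEnd ℂ) a * c)).re = (a * (starRingEnd ℂ) c).re := by
      simp only [one_mul, map_mul, Complex.conj_conj]
    rw [Complex.normSq_one, h1, h2]
  -- squared comparison
  have hsq : (‖a - c‖ * (1 + p * q))^2 ≤ ((p + q) * ‖1 - (starRingEnd ℂ) a * c‖)^2 := by
    have e1 : (‖a - c‖ * (1 + p * q))^2
        = (‖a - c‖)^2 * (1 + p*q)^2 := by ring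
    have e2 : ((p + q) * ‖1 - (starRingEnd ℂ) a * c‖)^2
        = (p+q)^2 * (‖1 - (starRingEnd ℂ) a * c‖)^2 := by ring
    rw [e1, e2, hnum, hden]
    set s := (a * (starRingEnd ℂ) c).re
    have key : (p+q)^2*(1+p^2*q^2-2*s) - (p^2+q^2-2*s)*(1+p*q)^2
        = 2*(s+p*q)*((1-p^2)*(1-q^2)) := by ring
    have hp2 : p^2 < 1 := by nlinarith
    have hq2 : q^2 < 1 := by nlinarith
    have pos : 0 ≤ 2*(s+p*q)*((1-p^2)*(1-q^2)) := by
      apply mul_nonneg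
      · linarith
      · nlinarith
    linarith
  have h1 : 0 ≤ ‖a - c‖ * (1 + p * q) := by positivity
  have h2 : 0 ≤ (p + q) * ‖1 - (starRingEnd ℂ) a * c‖ := by positivity
  nlinarith [hsq]

/-! ### Möbius transformations -/

def T (a z : ℂ) : ℂ := (a - z) / (1 - (starRingEnd ℂ) a * z)

lemma abs_T (a z : ℂ) : ‖T a z‖ = rho a z := rfl

lemma T_mem {a z : ℂ} (ha : ‖a‖ < 1) (hz : ‖z‖ < 1) :
    ‖T a z‖ < 1 := by
  rw [abs_T]; exact rho_lt_one ha hz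

lemma one_sub_mul_conj_ne_zero {a : ℂ} (ha : ‖a‖ < 1) :
    (1:ℂ) - a * (starRingEnd ℂ) a ≠ 0 := by
  intro h
  have : (Complex.normSq a : ℂ) = 1 := by
    rw [← Complex.mul_conj]; linear_combination -h
  have : Complex.normSq a = 1 := by exact_mod_cast this
  have := normSq_lt_one ha
  linarith

lemma T_zero (a : ℂ) : T a 0 = a := by simp [T]

lemma T_self (a : ℂ) : T a a = 0 := by simp [T]

lemma T_T {a z : ℂ} (ha : ‖a‖ < 1) (hz : ‖z‖ < 1) :
    T a (T a z) = z := by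
  have h1 : (1:ℂ) - (starRingEnd ℂ) a * z ≠ 0 := denom_ne_zero ha hz
  have h3 : (1:ℂ) - a * (starRingEnd ℂ) a ≠ 0 := one_sub_mul_conj_ne_zero ha
  have hd : (1:ℂ) - (starRingEnd ℂ) a * T a z
      = (1 - a * (starRingEnd ℂ) a) / (1 - (starRingEnd ℂ) a * z) := by
    rw [T, eq_div_iff h1]
    field_simp
    ring
  have hn : a - T a z = z * (1 - a * (starRingEnd ℂ) a) / (1 - (starRingEnd ℂ) a * z) := by
    rw [T, eq_div_iff h1, sub_mul, div_mul_cancel₀ _ h1]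
    ring
  rw [T, hn, hd, div_div_div_comm, div_self h1, div_one, mul_div_assoc, div_self h3, mul_one]

lemma conj_T (a z : ℂ) : (starRingEnd ℂ) (T a z)
    = ((starRingEnd ℂ) a - (starRingEnd ℂ) z) / (1 - a * (starRingEnd ℂ) z) := by
  simp [T, map_div₀, Complex.conj_conj]

lemma rho_T {a z w : ℂ} (ha : ‖a‖ < 1) (hz : ‖z‖ < 1)
    (hw : ‖w‖ < 1) : rho (T a z) (T a w) = rho z w := by
  have hz1 : (1:ℂ) - (starRingEnd ℂ) a * z ≠ 0 := denom_ne_zero ha hz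
  have hw1 : (1:ℂ) - (starRingEnd ℂ) a * w ≠ 0 := denom_ne_zero ha hw
  have hz2 : (1:ℂ) - a * (starRingEnd ℂ) z ≠ 0 := by
    intro h
    apply hz1
    have := congrArg (starRingEnd ℂ) h
    simpa [map_sub, map_mul, Complex.conj_conj, mul_comm] using this
  have ha1 : (1:ℂ) - a * (starRingEnd ℂ) a ≠ 0 := one_sub_mul_conj_ne_zero ha
  have hzw : (1:ℂ) - (starRingEnd ℂ) z * w ≠ 0 := denom_ne_zero hz hw
  have E1 : T a z - T a w = ((a * (starRingEnd ℂ) a - 1) * (z - w))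
      / ((1 - (starRingEnd ℂ) a * z) * (1 - (starRingEnd ℂ) a * w)) := by
    rw [T, T, div_sub_div _ _ hz1 hw1]
    congr 1
    ring
  have E2 : 1 - (starRingEnd ℂ) (T a z) * T a w
      = ((1 - a * (starRingEnd ℂ) a) * (1 - (starRingEnd ℂ) z * w))
      / ((1 - a * (starRingEnd ℂ) z) * (1 - (starRingEnd ℂ) a * w)) := by
    rw [conj_T, T, div_mul_div_comm, one_sub_div (mul_ne_zero hz2 hw1)]
    congr 1
    ring
  rw [rho, E1, E2]
  rw [norm_div, norm_div, norm_div, norm_mul, norm_mul, norm_mul, norm_mul]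
  have hca : ‖1 - a * (starRingEnd ℂ) z‖ = ‖1 - (starRingEnd ℂ) a * z‖ := by
    rw [← Complex.norm_conj (1 - a * (starRingEnd ℂ) z)]
    congr 1
    simp [map_sub, map_mul, Complex.conj_conj, mul_comm]
  have haa : ‖a * (starRingEnd ℂ) a - 1‖ = ‖1 - a * (starRingEnd ℂ) a‖ := by
    rw [← norm_sub_rev]
  have p1 : ‖1 - (starRingEnd ℂ) a * z‖ ≠ 0 := norm_ne_zero_iff.mpr hz1
  have p2 : ‖1 - (starRingEnd ℂ) a * w‖ ≠ 0 := norm_ne_zero_iff.mpr hw1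
  have p3 : ‖1 - a * (starRingEnd ℂ) a‖ ≠ 0 := norm_ne_zero_iff.mpr ha1
  rw [hca, haa, div_div_div_comm, div_self (mul_ne_zero p1 p2), div_one,
    mul_div_mul_left _ _ p3, rho, norm_div]

/-! ### triangle inequality for kD -/

lemma kD_triangle {a b c : ℂ} (ha : ‖a‖ < 1) (hb : ‖b‖ < 1)
    (hc : ‖c‖ < 1) : kD a c ≤ kD a b + kD b c := by
  have hTa : ‖T b a‖ < 1 := T_mem hb ha
  have hTc : ‖T b c‖ < 1 := T_mem hb hc
  have hinv : rho a c = rho (T b a) (T b c) := (rho_T hb ha hc).symm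
  have hbase := rho_le_base hTa hTc
  rw [abs_T, abs_T] at hbase
  rw [← hinv] at hbase
  have hx : rho b a = rho a b := rho_symm b a
  rw [hx] at hbase
  have h1 : 0 ≤ rho a b := rho_nonneg a b
  have h2 : 0 ≤ rho b c := rho_nonneg b c
  have h3 : rho a b < 1 := rho_lt_one ha hb
  have h4 : rho b c < 1 := rho_lt_one hb hc
  have hlt1 : (rho a b + rho b c) / (1 + rho a b * rho b c) < 1 := by
    rw [div_lt_one (by nlinarith)]
    nlinarith
  have hmono : arctanh (rho a c) ≤ arctanh ((rho a b + rho b c) / (1 + rho a b * rho b c)) :=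
    arctanh_le_arctanh (rho_nonneg a c) hbase hlt1
  rw [kD_eq, kD_eq, kD_eq, arctanh_add h1 h3 h2 h4]
  exact hmono

/-! ### Schwarz–Pick -/

lemma T_differentiableOn {a : ℂ} (ha : ‖a‖ < 1) :
    DifferentiableOn ℂ (T a) unitDisc := by
  apply DifferentiableOn.div
  · exact (differentiable_const a).differentiableOn.sub differentiable_id.differentiableOn
  · exact (differentiable_const _).differentiableOn.sub
      ((differentiable_const _).mul differentiable_id).differentiableOn
  · intro z hz
    exact denom_ne_zero ha hz

lemma T_mapsTo {a : ℂ} (ha : ‖a‖ < 1) : MapsTo (T a) unitDisc unitDisc :=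
  fun z hz => T_mem ha hz

lemma schwarzPick {f : ℂ → ℂ} (hd : DifferentiableOn ℂ f unitDisc)
    (hm : MapsTo f unitDisc unitDisc) {a b : ℂ} (ha : a ∈ unitDisc) (hb : b ∈ unitDisc) :
    kD (f a) (f b) ≤ kD a b := by
  have ha' : ‖a‖ < 1 := ha
  have hb' : ‖b‖ < 1 := hb
  have hfa : ‖f a‖ < 1 := hm ha
  have hfb : ‖f b‖ < 1 := hm hb
  set F : ℂ → ℂ := fun z => T (f a) (f (T a z)) with hF
  have hFd : DifferentiableOn ℂ F unitDisc := by
    apply ((T_differentiableOn hfa).comp (hd.comp (T_differentiableOn ha') (T_mapsTo ha'))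
      (MapsTo.comp hm (T_mapsTo ha')))
  have hFm : MapsTo F unitDisc unitDisc :=
    fun z hz => T_mem hfa (hm ((T_mapsTo ha') hz))
  have hF0 : F 0 = 0 := by
    rw [hF]
    simp only [T_zero]
    exact T_self (f a)
  have hTab : T a b ∈ unitDisc := T_mem ha' hb'
  have key : dist (F (T a b)) (F 0) ≤ 1 / 1 * dist (T a b) 0 := by
    apply dist_le_div_mul_dist_of_mapsTo_ball
    · rwa [← unitDisc_eq_ball]
    · rw [← unitDisc_eq_ball, hF0]
      exact hFm.mono_right (by rw [unitDisc_eq_ball]; exact Metric.ball_subset_closedBall)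
    · rwa [← unitDisc_eq_ball]
  rw [hF0, one_div_one, one_mul, Complex.dist_eq, Complex.dist_eq, sub_zero, sub_zero] at key
  have hFT : F (T a b) = T (f a) (f b) := by simp only [hF]; rw [T_T ha' hb']
  rw [hFT, abs_T, abs_T] at key
  rw [kD_eq, kD_eq]
  exact arctanh_le_arctanh (rho_nonneg _ _) key (rho_lt_one ha' hb')

/-! ### projection onto a diameter contracts distance from 0 -/

lemma normSq_sub_real {z τ : ℂ} (hτ : ‖τ‖ = 1) (r : ℝ) :
    Complex.normSq (z - (r:ℂ) * τ)
      = Complex.normSq z - 2 * (z * (starRingEnd ℂ) τ).re * r + r^2 := by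
  have hτ2 : Complex.normSq τ = 1 := by
    rw [← Complex.sq_norm, hτ]; norm_num
  rw [Complex.normSq_sub]
  have h1 : Complex.normSq ((r:ℂ) * τ) = r^2 := by
    rw [Complex.normSq_mul, hτ2, Complex.normSq_ofReal]; ring
  have h2 : (z * (starRingEnd ℂ) ((r:ℂ) * τ)).re = (z * (starRingEnd ℂ) τ).re * r := by
    rw [map_mul, Complex.conj_ofReal]
    have : z * ((r:ℂ) * (starRingEnd ℂ) τ) = (r:ℂ) * (z * (starRingEnd ℂ) τ) := by ring
    rw [show z * ((r:ℂ) * (starRingEnd ℂ) τ) = (r:ℂ) * (z * (starRingEnd ℂ) τ) by ring,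
      Complex.re_ofReal_mul]
    ring
  rw [h1, h2]; ring

lemma normSq_denom_real {z τ : ℂ} (hτ : ‖τ‖ = 1) (r : ℝ) :
    Complex.normSq (1 - (starRingEnd ℂ) z * ((r:ℂ) * τ))
      = 1 - 2 * (z * (starRingEnd ℂ) τ).re * r + Complex.normSq z * r^2 := by
  have hτ2 : Complex.normSq τ = 1 := by
    rw [← Complex.sq_norm, hτ]; norm_num
  rw [Complex.normSq_sub]
  have h1 : Complex.normSq ((starRingEnd ℂ) z * ((r:ℂ) * τ)) = Complex.normSq z * r^2 := by
    rw [Complex.normSq_mul, Complex.normSq_mul, Complex.normSq_conj, Complex.normSq_ofReal, hτ2]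
    ring
  have h2 : ((1:ℂ) * (starRingEnd ℂ) ((starRingEnd ℂ) z * ((r:ℂ) * τ))).re
      = (z * (starRingEnd ℂ) τ).re * r := by
    simp only [one_mul, map_mul, Complex.conj_conj, Complex.conj_ofReal]
    rw [show z * ((r:ℂ) * (starRingEnd ℂ) τ) = (r:ℂ) * (z * (starRingEnd ℂ) τ) by ring,
      Complex.re_ofReal_mul]
    ring
  rw [Complex.normSq_one, h1, h2]; ring

lemma inv_trick {m x r : ℝ} (hm0 : 0 ≤ m) (hm1 : m < 1) (hrm : m < r^2) (hrne : r ≠ 0)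
    (hN : 0 < m - 2*x*r + r^2) :
    (m - 2*x*(m/r) + (m/r)^2) * (1 - 2*x*r + m*r^2)
      < (m - 2*x*r + r^2) * (1 - 2*x*(m/r) + m*(m/r)^2) := by
  rw [← sub_pos]
  have e : (m - 2*x*r + r^2) * (1 - 2*x*(m/r) + m*(m/r)^2)
      - (m - 2*x*(m/r) + (m/r)^2) * (1 - 2*x*r + m*r^2)
      = ((m - 2*x*r + r^2) * ((1-m^2)*(r^2-m)))/r^2 := by
    field_simp
    ring
  rw [e]
  apply div_pos
  · apply mul_pos hN
    apply mul_pos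
    · nlinarith
    · linarith
  · positivity

lemma proj_bound {τ : ℂ} (hτ : ‖τ‖ = 1) {pz z : ℂ} (hz : z ∈ unitDisc)
    {r : ℝ} (hr : r ∈ Set.Ioo (-1:ℝ) 1) (hpz : pz = (r:ℂ) * τ)
    (hmin : ∀ s : ℝ, s ∈ Set.Ioo (-1:ℝ) 1 → kD z pz ≤ kD z ((s:ℂ) * τ)) :
    ‖pz‖ < 1 ∧ kD 0 pz ≤ kD 0 z := by
  have hz' : ‖z‖ < 1 := hz
  have hm0 : 0 ≤ Complex.normSq z := Complex.normSq_nonneg z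
  have hm1 : Complex.normSq z < 1 := normSq_lt_one hz'
  have hτ2 : Complex.normSq τ = 1 := by rw [← Complex.sq_norm, hτ]; norm_num
  have habs_r : ∀ s : ℝ, ‖(s:ℂ) * τ‖ = |s| := by
    intro s
    rw [norm_mul, hτ, Complex.norm_real, Real.norm_eq_abs, mul_one]
  have hrabs : |r| < 1 := abs_lt.mpr ⟨hr.1, hr.2⟩
  -- key claim: r^2 ≤ normSq z
  have hr2 : r^2 ≤ Complex.normSq z := by
    by_contra hcon
    push_neg at hcon
    have hrne : r ≠ 0 := by
      intro h; rw [h] at hcon; simp at hcon; linarith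
    have hra : 0 < |r| := abs_pos.mpr hrne
    set s : ℝ := Complex.normSq z / r with hs
    have habs_s : |s| < 1 := by
      have h1 : |s| * |r| = Complex.normSq z := by
        rw [← abs_mul, hs, div_mul_cancel₀ _ hrne, _root_.abs_of_nonneg hm0]
      have h2 : |s| < |r| := by nlinarith [_root_.sq_abs r]
      linarith
    have hs_mem : s ∈ Set.Ioo (-1:ℝ) 1 := by
      rcases abs_lt.mp habs_s with ⟨u, v⟩; exact ⟨u, v⟩
    have hrd : ‖(r:ℂ) * τ‖ < 1 := by rw [habs_r]; exact hrabs
    have hsd : ‖(s:ℂ) * τ‖ < 1 := by rw [habs_r]; exact habs_s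
    have hDr0 : 0 < Complex.normSq (1 - (starRingEnd ℂ) z * ((r:ℂ) * τ)) :=
      Complex.normSq_pos.mpr (denom_ne_zero hz' hrd)
    have hDs0 : 0 < Complex.normSq (1 - (starRingEnd ℂ) z * ((s:ℂ) * τ)) :=
      Complex.normSq_pos.mpr (denom_ne_zero hz' hsd)
    have hNr0 : 0 < Complex.normSq (z - (r:ℂ) * τ) := by
      rw [Complex.normSq_pos]
      intro h
      have hzr : z = (r:ℂ) * τ := by linear_combination h
      have : Complex.normSq z = r^2 := by
        rw [hzr, Complex.normSq_mul, Complex.normSq_ofReal, hτ2]; ring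
      linarith
    have hNr := normSq_sub_real (z := z) hτ r
    have hDr := normSq_denom_real (z := z) hτ r
    have hNs := normSq_sub_real (z := z) hτ s
    have hDs := normSq_denom_real (z := z) hτ s
    have hkey : Complex.normSq (z - (s:ℂ) * τ)
          * Complex.normSq (1 - (starRingEnd ℂ) z * ((r:ℂ) * τ))
        < Complex.normSq (z - (r:ℂ) * τ)
          * Complex.normSq (1 - (starRingEnd ℂ) z * ((s:ℂ) * τ)) := by
      rw [hNr, hDr, hNs, hDs, hs]
      have hN' : 0 < Complex.normSq z - 2 * (z * (starRingEnd ℂ) τ).re * r + r^2 := by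
        rw [← hNr]; exact hNr0
      exact inv_trick hm0 hm1 hcon hrne hN'
    have hrho : rho z ((s:ℂ) * τ) < rho z ((r:ℂ) * τ) := by
      have h1 : (rho z ((s:ℂ) * τ))^2 = Complex.normSq (z - (s:ℂ) * τ)
          / Complex.normSq (1 - (starRingEnd ℂ) z * ((s:ℂ) * τ)) := by
        rw [rho, ← Complex.sq_norm, norm_div, div_pow, Complex.sq_norm, Complex.sq_norm]
      have h2 : (rho z ((r:ℂ) * τ))^2 = Complex.normSq (z - (r:ℂ) * τ)
          / Complex.normSq (1 - (starRingEnd ℂ) z * ((r:ℂ) * τ)) := by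
        rw [rho, ← Complex.sq_norm, norm_div, div_pow, Complex.sq_norm, Complex.sq_norm]
      have hsq : (rho z ((s:ℂ) * τ))^2 < (rho z ((r:ℂ) * τ))^2 := by
        rw [h1, h2, div_lt_div_iff₀ hDs0 hDr0]
        linarith [hkey]
      nlinarith [rho_nonneg z ((s:ℂ) * τ), rho_nonneg z ((r:ℂ) * τ)]
    have hmin_s := hmin s hs_mem
    rw [hpz, kD_eq, kD_eq] at hmin_s
    have : arctanh (rho z ((s:ℂ) * τ)) < arctanh (rho z ((r:ℂ) * τ)) :=
      arctanh_lt_arctanh (rho_nonneg _ _) hrho (rho_lt_one hz' hrd)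
    linarith
  -- conclude
  have habs : ‖pz‖ = |r| := by rw [hpz, habs_r]
  have h1 : |r| ≤ ‖z‖ := by
    have h2 : (|r|)^2 ≤ (‖z‖)^2 := by
      rw [_root_.sq_abs, Complex.sq_norm]; exact hr2
    nlinarith [abs_nonneg r, norm_nonneg z]
  constructor
  · rw [habs]; exact lt_of_le_of_lt h1 hz'
  · rw [kD_zero_left, kD_zero_left, habs]
    exact arctanh_le_arctanh (abs_nonneg r) h1 hz'

/-! ### injective holomorphic maps have nonvanishing derivative -/

lemma deriv_ne_zero_of_injOn {f : ℂ → ℂ} {s : Set ℂ} (hs : IsOpen s)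
    (hd : DifferentiableOn ℂ f s) (hi : Set.InjOn f s) {z₀ : ℂ} (hz : z₀ ∈ s) :
    deriv f z₀ ≠ 0 := by
  intro h0
  have hsn : s ∈ 𝓝 z₀ := hs.mem_nhds hz
  have hA : AnalyticAt ℂ f z₀ := hd.analyticAt hsn
  have hgA : AnalyticAt ℂ (fun z => f z - f z₀) z₀ := hA.sub analyticAt_const
  -- order is not ⊤
  have hot : analyticOrderAt (fun z => f z - f z₀) z₀ ≠ ⊤ := by
    intro htop
    have hev : ∀ᶠ z in 𝓝 z₀, f z - f z₀ = 0 := analyticOrderAt_eq_top.mp htop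
    have hev2 : ∀ᶠ z in 𝓝[≠] z₀, (f z - f z₀ = 0 ∧ z ∈ s) ∧ z ∈ ({z₀}ᶜ : Set ℂ) :=
      (((hev.and (hs.eventually_mem hz)).filter_mono nhdsWithin_le_nhds).and
        eventually_mem_nhdsWithin)
    obtain ⟨z₁, ⟨hz1g, hz1s⟩, hz1ne⟩ := hev2.exists
    exact hz1ne (hi hz1s hz (by linear_combination hz1g))
  obtain ⟨n, hn⟩ : ∃ n : ℕ, analyticOrderAt (fun z => f z - f z₀) z₀ = n :=
    ⟨_, (ENat.natCast_toNat_eq_self.mpr hot).symm⟩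
  obtain ⟨u, huA, hu0, hufac⟩ := hgA.analyticOrderAt_eq_natCast.mp hn
  -- n ≠ 0
  have hn0 : n ≠ 0 := by
    intro h
    rw [h] at hufac
    have h1 : f z₀ - f z₀ = (z₀ - z₀) ^ 0 • u z₀ := hufac.self_of_nhds
    simp at h1
    exact hu0 h1.symm
  -- n ≠ 1
  have hn1 : n ≠ 1 := by
    intro h
    rw [h] at hufac
    have hder : deriv (fun z => f z - f z₀) z₀ = deriv (fun z => (z - z₀) ^ 1 • u z) z₀ :=
      Filter.EventuallyEq.deriv_eq hufac
    have h1 : deriv (fun z => f z - f z₀) z₀ = deriv f z₀ := by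
      rw [deriv_sub_const]
    have hu_diff : DifferentiableAt ℂ u z₀ := huA.differentiableAt
    have h2 : deriv (fun z => (z - z₀) ^ 1 • u z) z₀ = u z₀ := by
      simp only [pow_one, smul_eq_mul]
      rw [deriv_fun_mul (by fun_prop) hu_diff]
      simp
    rw [h1, h0] at hder
    exact hu0 (by rw [← h2, ← hder])
  have hn2 : 2 ≤ n := by omega
  -- construct n-th root of u near z₀
  obtain ⟨c, hc⟩ := IsAlgClosed.exists_pow_nat_eq (u z₀) (n := n) (by omega)
  have hc0 : c ≠ 0 := by
    intro h; rw [h] at hc; simp [zero_pow hn0] at hc; exact hu0 hc.symm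
  set v : ℂ → ℂ := fun z => c * Complex.exp ((n:ℂ)⁻¹ * Complex.log (u z / u z₀)) with hv
  have hvA : AnalyticAt ℂ v z₀ := by
    apply analyticAt_const.mul
    apply AnalyticAt.cexp
    apply analyticAt_const.mul
    apply (analyticAt_clog ?_).comp (huA.div analyticAt_const hu0)
    rw [Pi.div_apply, div_self hu0]
    exact Complex.one_mem_slitPlane
  have hvn : ∀ᶠ z in 𝓝 z₀, v z ^ n = u z := by
    have hune : ∀ᶠ z in 𝓝 z₀, u z ≠ 0 :=
      huA.continuousAt.eventually_ne hu0
    filter_upwards [hune] with z hz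
    rw [hv]
    simp only []
    rw [mul_pow, ← Complex.exp_nat_mul]
    rw [← mul_assoc, mul_inv_cancel₀ (by exact_mod_cast hn0 : (n:ℂ) ≠ 0), one_mul]
    rw [Complex.exp_log (div_ne_zero hz hu0), hc]
    field_simp
  set φ : ℂ → ℂ := fun z => (z - z₀) * v z with hφ
  have hφA : AnalyticAt ℂ φ z₀ := ((analyticAt_id.sub analyticAt_const).mul hvA)
  have hφ0 : φ z₀ = 0 := by simp [hφ]
  have hv0 : v z₀ = c := by
    rw [hv]; simp only []
    rw [div_self hu0, Complex.log_one, mul_zero, Complex.exp_zero, mul_one]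
  have hφd : HasStrictDerivAt φ c z₀ := by
    have h1 : HasStrictDerivAt (fun z => z - z₀) 1 z₀ :=
      (hasStrictDerivAt_id z₀).sub_const z₀
    have h2 : HasStrictDerivAt v (deriv v z₀) z₀ :=
      hvA.hasStrictFDerivAt.hasStrictDerivAt
    have := h1.fun_mul h2
    simpa [hv0] using this
  -- local inverse of φ
  have hfac : ∀ᶠ z in 𝓝 z₀, f z - f z₀ = φ z ^ n := by
    filter_upwards [hufac, hvn] with z h1 h2
    rw [h1, hφ]
    simp only [smul_eq_mul]
    rw [mul_pow, h2]
  set e := hφd.hasStrictFDerivAt_equiv hc0 with he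
  have hrinv : ∀ᶠ w in 𝓝 (φ z₀), φ (e.localInverse φ _ z₀ w) = w :=
    e.eventually_right_inverse
  have hcont : ContinuousAt (e.localInverse φ _ z₀) (φ z₀) := e.localInverse_continuousAt
  have hinv0 : e.localInverse φ _ z₀ (φ z₀) = z₀ := e.localInverse_apply_image
  rw [hφ0] at hrinv hcont hinv0
  -- good neighborhood of 0
  have hWn : {z | (f z - f z₀ = φ z ^ n) ∧ z ∈ s} ∈ 𝓝 z₀ := by
    filter_upwards [hfac, hsn] with z h1 h2
    exact ⟨h1, h2⟩
  have hUn : (e.localInverse φ _ z₀) ⁻¹' {z | (f z - f z₀ = φ z ^ n) ∧ z ∈ s} ∈ 𝓝 (0:ℂ) := by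
    apply hcont
    rw [hinv0]
    exact hWn
  set inv := e.localInverse φ _ z₀ with hinv
  obtain ⟨U, hUsub, hU⟩ := (hrinv.and hUn).exists_mem
  -- the root of unity
  set ζ := Complex.exp (2 * Real.pi * Complex.I / n) with hζdef
  have hζ : IsPrimitiveRoot ζ n := Complex.isPrimitiveRoot_exp n hn0
  have hζn : ζ ^ n = 1 := hζ.pow_eq_one
  have hζ1 : ζ ≠ 1 := hζ.ne_one (by omega)
  have hζ0 : ζ ≠ 0 := Complex.exp_ne_zero _
  -- pick a small nonzero w with w and ζ w in U
  have hpre : (fun y => ζ * y) ⁻¹' U ∈ 𝓝 (0:ℂ) := by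
    have hco : ContinuousAt (fun y => ζ * y) (0:ℂ) :=
      (continuous_const.mul continuous_id).continuousAt
    have : (fun y => ζ * y) 0 = 0 := by simp
    apply hco
    rw [this]
    exact hUsub
  have hev : ∀ᶠ y in 𝓝 (0:ℂ), y ∈ U ∧ (ζ * y) ∈ U := by
    filter_upwards [hUsub, hpre] with y hy1 hy2
    exact ⟨hy1, hy2⟩
  have hev2 : ∀ᶠ y in 𝓝[≠] (0:ℂ), (y ∈ U ∧ (ζ * y) ∈ U) ∧ y ∈ ({0}ᶜ : Set ℂ) :=
    (hev.filter_mono nhdsWithin_le_nhds).and eventually_mem_nhdsWithin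
  obtain ⟨w, ⟨hwU, hζwU⟩, hw0⟩ := hev2.exists
  have hw0' : w ≠ 0 := hw0
  obtain ⟨h1, h2, h3⟩ := hU w hwU
  obtain ⟨h4, h5, h6⟩ := hU (ζ * w) hζwU
  -- h1 : φ (inv w) = w, h2 : f (inv w) - f z₀ = φ (inv w) ^ n, h3 : inv w ∈ s
  have hf1 : f (inv w) - f z₀ = w ^ n := by rw [h2, h1]
  have hf2 : f (inv (ζ * w)) - f z₀ = w ^ n := by
    rw [h5, h4, mul_pow, hζn, one_mul]
  have hfe : f (inv w) = f (inv (ζ * w)) := by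
    have := hf1.trans hf2.symm
    linear_combination this
  have heq : inv w = inv (ζ * w) := hi h3 h6 hfe
  have : w = ζ * w := by
    rw [heq] at h1
    exact h1.symm.trans h4
  have : (ζ - 1) * w = 0 := by linear_combination this.symm
  rcases mul_eq_zero.mp this with h | h
  · exact hζ1 (by linear_combination h)
  · exact hw0' h

/-! ### the subordination map G -/

section G

variable {h htil : ℂ → ℂ}

lemma G_spec (hsub : h '' unitDisc ⊆ htil '' unitDisc) {z : ℂ} (hz : z ∈ unitDisc) :
    Function.invFunOn htil unitDisc (h z) ∈ unitDisc ∧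
      htil (Function.invFunOn htil unitDisc (h z)) = h z := by
  have : h z ∈ htil '' unitDisc := hsub ⟨z, hz, rfl⟩
  obtain ⟨a, ha, hae⟩ := this
  have hex : ∃ a ∈ unitDisc, htil a = h z := ⟨a, ha, hae⟩
  exact ⟨Function.invFunOn_mem hex, Function.invFunOn_eq hex⟩

lemma G_unique (hinj : Set.InjOn htil unitDisc) (hsub : h '' unitDisc ⊆ htil '' unitDisc)
    {z u : ℂ} (hz : z ∈ unitDisc) (hu : u ∈ unitDisc) (he : htil u = h z) :
    u = Function.invFunOn htil unitDisc (h z) := by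
  obtain ⟨hm, heq⟩ := G_spec hsub hz
  exact hinj hu hm (he.trans heq.symm)

lemma G_differentiableOn (hhd : DifferentiableOn ℂ h unitDisc)
    (htd : DifferentiableOn ℂ htil unitDisc) (hinj : Set.InjOn htil unitDisc)
    (hsub : h '' unitDisc ⊆ htil '' unitDisc) :
    DifferentiableOn ℂ (fun z => Function.invFunOn htil unitDisc (h z)) unitDisc := by
  intro z hz
  apply DifferentiableAt.differentiableWithinAt
  obtain ⟨hζm, hζe⟩ := G_spec hsub hz
  set ζ := Function.invFunOn htil unitDisc (h z) with hζ
  have hA : AnalyticAt ℂ htil ζ := htd.analyticAt (isOpen_unitDisc.mem_nhds hζm)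
  have hstrict0 := hA.hasStrictFDerivAt.hasStrictDerivAt
  have hdval : deriv htil ζ = (fderiv ℂ htil ζ) 1 := hstrict0.hasDerivAt.deriv.symm
  have hd0 : (fderiv ℂ htil ζ) 1 ≠ 0 := by
    rw [← hdval]
    exact deriv_ne_zero_of_injOn isOpen_unitDisc htd hinj hζm
  set e := hstrict0.hasStrictFDerivAt_equiv hd0 with he
  set l := e.localInverse htil _ ζ with hl
  have hrinv : ∀ᶠ y in 𝓝 (htil ζ), htil (l y) = y := e.eventually_right_inverse
  have hcont : ContinuousAt l (htil ζ) := e.localInverse_continuousAt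
  have hl0 : l (htil ζ) = ζ := e.localInverse_apply_image
  have hldiff : DifferentiableAt ℂ l (htil ζ) := e.to_localInverse.differentiableAt
  -- good neighborhood
  have hVn : {y : ℂ | htil (l y) = y ∧ l y ∈ unitDisc} ∈ 𝓝 (htil ζ) := by
    have h2 : l ⁻¹' unitDisc ∈ 𝓝 (htil ζ) := by
      apply hcont
      rw [hl0]
      exact isOpen_unitDisc.mem_nhds hζm
    filter_upwards [hrinv, h2] with y hy1 hy2
    exact ⟨hy1, hy2⟩
  have hhcont : ContinuousAt h z :=
    (hhd.differentiableAt (isOpen_unitDisc.mem_nhds hz)).continuousAt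
  have hev : ∀ᶠ w in 𝓝 z, (h w ∈ {y : ℂ | htil (l y) = y ∧ l y ∈ unitDisc}) ∧ w ∈ unitDisc := by
    have h1 : ∀ᶠ w in 𝓝 z, h w ∈ {y : ℂ | htil (l y) = y ∧ l y ∈ unitDisc} := by
      apply hhcont
      rw [hζe] at hVn
      exact hVn
    filter_upwards [h1, isOpen_unitDisc.eventually_mem hz] with w hw1 hw2
    exact ⟨hw1, hw2⟩
  have hGeq : (fun w => Function.invFunOn htil unitDisc (h w)) =ᶠ[𝓝 z] fun w => l (h w) := by
    filter_upwards [hev] with w ⟨⟨hw1, hw2⟩, hw3⟩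
    exact (G_unique hinj hsub hw3 hw2 hw1).symm
  have hcomp : DifferentiableAt ℂ (fun w => l (h w)) z := by
    apply DifferentiableAt.comp
    · rw [hζe] at hldiff
      exact hldiff
    · exact hhd.differentiableAt (isOpen_unitDisc.mem_nhds hz)
  exact hcomp.congr_of_eventuallyEq hGeq

end G

end Aux

/-- **Remark 3.1:** if `h(𝔻) ⊆ h̃(𝔻)`, then `liminf [v(t) − ṽ^o(t)] > −∞`, comparing the
total speed of the smaller semigroup with the orthogonal speed of the larger one. -/
theorem totalSpeed_liminf_sub_orthSpeed_gt_bot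
    (φ ψ : ℝ → ℂ → ℂ) (h htil : ℂ → ℂ) (τ τtil : ℂ) (p ptil : ℂ → ℂ)
    (hφ : IsNonElliptic φ) (hψ : IsNonElliptic ψ)
    (hτ : IsDenjoyWolff φ τ) (hτtil : IsDenjoyWolff ψ τtil)
    (hKoe : IsKoenigs φ h) (hKoetil : IsKoenigs ψ htil)
    (hp : IsOrthProjection τ p) (hptil : IsOrthProjection τtil ptil)
    (hsub : h '' unitDisc ⊆ htil '' unitDisc) :
    Filter.liminf (fun t : ℝ =>
        ((totalSpeed φ t - orthSpeed ψ ptil t : ℝ) : EReal)) atTop > ⊥ := by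
  classical
  obtain ⟨hhd, hhinj, hhkoe⟩ := hKoe
  obtain ⟨htd, htinj, htkoe⟩ := hKoetil
  have h0 : (0:ℂ) ∈ unitDisc := Aux.zero_mem
  set G : ℂ → ℂ := fun z => Function.invFunOn htil unitDisc (h z) with hG
  obtain ⟨hz0m, hz0e⟩ := Aux.G_spec hsub h0
  have hGd : DifferentiableOn ℂ G unitDisc := Aux.G_differentiableOn hhd htd htinj hsub
  have hGm : Set.MapsTo G unitDisc unitDisc := fun z hz => (Aux.G_spec hsub hz).1
  set C := kD 0 (G 0) with hC
  have key : ∀ t : ℝ, 0 ≤ t → orthSpeed ψ ptil t ≤ totalSpeed φ t + 2 * C := by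
    intro t ht
    have hφt0 : φ t 0 ∈ unitDisc := hφ.mapsTo t ht h0
    have hψt_maps := hψ.mapsTo t ht
    have hψt_holo := hψ.holo t ht
    have hw1 : ψ t 0 ∈ unitDisc := hψt_maps h0
    have hw2 : ψ t (G 0) ∈ unitDisc := hψt_maps hz0m
    have hcomm : ψ t (G 0) = G (φ t 0) := by
      apply Aux.G_unique htinj hsub hφt0 hw2
      rw [htkoe t ht (G 0) hz0m, hz0e, ← hhkoe t ht 0 h0]
    obtain ⟨⟨r, hr, hpr⟩, hmin⟩ := hptil (ψ t 0) hw1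
    obtain ⟨hpm, hpb⟩ := Aux.proj_bound hτtil.1 hw1 hr hpr hmin
    have tri1 : kD 0 (ψ t 0) ≤ kD 0 (ψ t (G 0)) + kD (ψ t (G 0)) (ψ t 0) :=
      Aux.kD_triangle Aux.zero_mem hw2 hw1
    have sp1 : kD (ψ t (G 0)) (ψ t 0) ≤ kD (G 0) 0 :=
      Aux.schwarzPick hψt_holo hψt_maps hz0m h0
    have tri2 : kD 0 (ψ t (G 0)) ≤ kD 0 (G 0) + kD (G 0) (ψ t (G 0)) :=
      Aux.kD_triangle Aux.zero_mem hz0m hw2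
    have sp2 : kD (G 0) (ψ t (G 0)) ≤ kD 0 (φ t 0) := by
      rw [hcomm]
      exact Aux.schwarzPick hGd hGm h0 hφt0
    have hsymm : kD (G 0) 0 = kD 0 (G 0) := Aux.kD_symm _ _
    have e1 : orthSpeed ψ ptil t = kD 0 (ptil (ψ t 0)) := rfl
    have e2 : totalSpeed φ t = kD 0 (φ t 0) := rfl
    rw [e1, e2]
    calc kD 0 (ptil (ψ t 0)) ≤ kD 0 (ψ t 0) := hpb
      _ ≤ kD 0 (ψ t (G 0)) + kD (ψ t (G 0)) (ψ t 0) := tri1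
      _ ≤ (kD 0 (G 0) + kD (G 0) (ψ t (G 0))) + kD (G 0) 0 := by
          have := sp1; have := tri2; linarith
      _ ≤ kD 0 (φ t 0) + 2 * C := by rw [hsymm, hC]; linarith [sp2]
  have hev : ∀ᶠ t in (atTop : Filter ℝ),
      ((-(2*C) : ℝ) : EReal) ≤ ((totalSpeed φ t - orthSpeed ψ ptil t : ℝ) : EReal) := by
    filter_upwards [eventually_ge_atTop (0:ℝ)] with t ht
    have hk := key t ht
    exact EReal.coe_le_coe_iff.mpr (by linarith)
  have hle : ((-(2*C) : ℝ) : EReal) ≤ Filter.liminf (fun t : ℝ =>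
      ((totalSpeed φ t - orthSpeed ψ ptil t : ℝ) : EReal)) atTop :=
    Filter.le_liminf_of_le (by isBoundedDefault) hev
  exact lt_of_lt_of_le (EReal.bot_lt_coe _) hle

end
end

section
/- Let (φ_t) be a non-elliptic semigroup in the unit disc 𝔻 with total speed v(t) and orthogonal speed v^o(t). If v(t₂) ≥ v(t₁) for some t₂ ≥ t₁ ≥ 0, then v^o(t₂) ≥ v^o(t₁). -/
open Complex Filter Topology Set MeasureTheory

noncomputable section

section auxJulia
open Metric

lemma arctanh_lt_arctanh {x y : ℝ} (hx : 0 ≤ x) (hxy : x < y) (hy : y < 1) :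
    arctanh x < arctanh y := by
  unfold arctanh
  have h1 : (0:ℝ) < 1 - y := by linarith
  have h2 : (0:ℝ) < 1 - x := by linarith
  have hpos : 0 < (1 + x) / (1 - x) := by positivity
  have : (1 + x) / (1 - x) < (1 + y) / (1 - y) := by
    rw [div_lt_div_iff₀ h2 h1]; nlinarith
  have := Real.log_lt_log hpos this
  linarith

lemma arctanh_le_arctanh {x y : ℝ} (hx : 0 ≤ x) (hxy : x ≤ y) (hy : y < 1) :
    arctanh x ≤ arctanh y := by
  rcases eq_or_lt_of_le hxy with rfl|h
  · exact le_rfl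
  · exact (arctanh_lt_arctanh hx h hy).le

lemma le_of_arctanh_le {x y : ℝ} (hx : 0 ≤ x) (hy : 0 ≤ y) (hx1 : x < 1)
    (h : arctanh x ≤ arctanh y) : x ≤ y := by
  by_contra hc
  push_neg at hc
  exact absurd h (not_le.2 (arctanh_lt_arctanh hy hc hx1))

/-- Möbius map -/
def moeb (a z : ℂ) : ℂ := (a - z) / (1 - (starRingEnd ℂ) a * z)

lemma den_ne_zero {a z : ℂ} (ha : ‖a‖ < 1) (hz : ‖z‖ < 1) :
    (1 : ℂ) - (starRingEnd ℂ) a * z ≠ 0 := by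
  intro h
  have h2 : (1:ℂ) = (starRingEnd ℂ) a * z := by linear_combination h
  have : ‖(starRingEnd ℂ) a * z‖ < 1 := by
    rw [norm_mul, Complex.norm_conj]
    nlinarith [norm_nonneg a, norm_nonneg z]
  rw [← h2] at this; simp at this

lemma normSq_key (a z : ℂ) :
    Complex.normSq (1 - (starRingEnd ℂ) a * z) - Complex.normSq (a - z)
      = (1 - Complex.normSq a) * (1 - Complex.normSq z) := by
  simp [Complex.normSq_apply, Complex.sub_re, Complex.sub_im, Complex.mul_re, Complex.mul_im,
    Complex.conj_re, Complex.conj_im, Complex.one_re, Complex.one_im]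
  ring

lemma abs_moeb_lt_one {a z : ℂ} (ha : ‖a‖ < 1) (hz : ‖z‖ < 1) :
    ‖moeb a z‖ < 1 := by
  have hden := den_ne_zero ha hz
  have h1 : Complex.normSq (1 - (starRingEnd ℂ) a * z) > 0 := Complex.normSq_pos.2 hden
  have h2 : Complex.normSq (a - z) < Complex.normSq (1 - (starRingEnd ℂ) a * z) := by
    have hk := normSq_key a z
    have ha' : Complex.normSq a < 1 := by rw [← Complex.sq_norm]; nlinarith [norm_nonneg a]
    have hz' : Complex.normSq z < 1 := by rw [← Complex.sq_norm]; nlinarith [norm_nonneg z]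
    nlinarith
  have : ‖moeb a z‖ ^ 2 < 1 := by
    rw [moeb, Complex.sq_norm, Complex.normSq_div]
    rw [div_lt_one h1]; exact h2
  nlinarith [norm_nonneg (moeb a z)]

lemma moeb_self (a : ℂ) : moeb a a = 0 := by simp [moeb]

lemma moeb_moeb {a z : ℂ} (ha : ‖a‖ < 1) (hz : ‖z‖ < 1) :
    moeb a (moeb a z) = z := by
  have hden := den_ne_zero ha hz
  have hsa : (1:ℂ) - (starRingEnd ℂ) a * a ≠ 0 := den_ne_zero ha ha
  have hsa' : (1:ℂ) - a * (starRingEnd ℂ) a ≠ 0 := by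
    rw [mul_comm]; exact hsa
  unfold moeb
  have e2 : (1:ℂ) - (starRingEnd ℂ) a * ((a - z) / (1 - (starRingEnd ℂ) a * z))
      = (1 - (starRingEnd ℂ) a * a) / (1 - (starRingEnd ℂ) a * z) := by
    rw [eq_div_iff hden, sub_mul, one_mul, mul_assoc, div_mul_cancel₀ _ hden]; ring
  rw [e2, div_eq_iff (div_ne_zero hsa hden)]
  rw [mul_div_assoc', eq_div_iff hden, sub_mul, div_mul_cancel₀ _ hden]; ring

lemma moeb_diffOn {a : ℂ} (ha : ‖a‖ < 1) :
    DifferentiableOn ℂ (moeb a) (ball 0 1) := by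
  apply DifferentiableOn.div
  · exact (differentiableOn_const a).sub differentiableOn_id
  · exact (differentiableOn_const 1).sub ((differentiableOn_const _).mul differentiableOn_id)
  · intro z hz
    rw [mem_ball_zero_iff] at hz
    exact den_ne_zero ha hz

lemma moeb_mapsTo {a : ℂ} (ha : ‖a‖ < 1) :
    Set.MapsTo (moeb a) (ball 0 1) (ball 0 1) := by
  intro z hz
  rw [mem_ball_zero_iff] at hz ⊢
  exact abs_moeb_lt_one ha hz

lemma schwarz_pick {f : ℂ → ℂ} (hd : DifferentiableOn ℂ f (ball 0 1))
    (hm : Set.MapsTo f (ball 0 1) (ball 0 1)) {z w : ℂ}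
    (hz : ‖z‖ < 1) (hw : ‖w‖ < 1) :
    ‖moeb (f z) (f w)‖ ≤ ‖moeb z w‖ := by
  have hz' : z ∈ ball (0:ℂ) 1 := by rwa [mem_ball_zero_iff]
  have hfz : ‖f z‖ < 1 := by
    have := hm hz'; rwa [mem_ball_zero_iff] at this
  have hinner : DifferentiableOn ℂ (f ∘ moeb z) (ball 0 1) :=
    hd.comp (moeb_diffOn hz) (moeb_mapsTo hz)
  have hinnerM : Set.MapsTo (f ∘ moeb z) (ball 0 1) (ball 0 1) :=
    hm.comp (moeb_mapsTo hz)
  have hgd : DifferentiableOn ℂ (moeb (f z) ∘ (f ∘ moeb z)) (ball 0 1) :=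
    (moeb_diffOn hfz).comp hinner hinnerM
  have hgm : Set.MapsTo (moeb (f z) ∘ (f ∘ moeb z)) (ball 0 1) (ball 0 1) :=
    (moeb_mapsTo hfz).comp hinnerM
  have h0 : (moeb (f z) ∘ (f ∘ moeb z)) 0 = 0 := by
    have : moeb z 0 = z := by simp [moeb]
    simp only [Function.comp_apply, this, moeb_self]
  have habs : ‖moeb z w‖ < 1 := abs_moeb_lt_one hz hw
  have := Complex.norm_le_norm_of_mapsTo_ball hgd (hgm.mono_right ball_subset_closedBall) h0 habs
  have hrw : (moeb (f z) ∘ (f ∘ moeb z)) (moeb z w) = moeb (f z) (f w) := by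
    simp only [Function.comp_apply, moeb_moeb hz hw]
  rwa [hrw] at this

lemma one_sub_normSq_moeb {a z : ℂ} (ha : ‖a‖ < 1) (hz : ‖z‖ < 1) :
    1 - Complex.normSq (moeb a z)
      = (1 - Complex.normSq a) * (1 - Complex.normSq z)
        / Complex.normSq (1 - (starRingEnd ℂ) a * z) := by
  have hden := den_ne_zero ha hz
  have hD : Complex.normSq (1 - (starRingEnd ℂ) a * z) ≠ 0 := by simpa using Complex.normSq_pos.2 hden |>.ne'
  rw [moeb, Complex.normSq_div, ← normSq_key a z]
  field_simp
  rw [sub_div, div_self (by rw [mul_comm]; exact hD)]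

lemma schwarz_pick_normSq {f : ℂ → ℂ} (hd : DifferentiableOn ℂ f (ball 0 1))
    (hm : Set.MapsTo f (ball 0 1) (ball 0 1)) {z w : ℂ}
    (hz : ‖z‖ < 1) (hw : ‖w‖ < 1) :
    (1 - Complex.normSq z) * (1 - Complex.normSq w)
        / Complex.normSq (1 - (starRingEnd ℂ) z * w)
      ≤ (1 - Complex.normSq (f z)) * (1 - Complex.normSq (f w))
        / Complex.normSq (1 - (starRingEnd ℂ) (f z) * f w) := by
  have hfz : ‖f z‖ < 1 := by
    have := hm (mem_ball_zero_iff.2 hz); rwa [mem_ball_zero_iff] at this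
  have hfw : ‖f w‖ < 1 := by
    have := hm (mem_ball_zero_iff.2 hw); rwa [mem_ball_zero_iff] at this
  have h := schwarz_pick hd hm hz hw
  have h2 : Complex.normSq (moeb (f z) (f w)) ≤ Complex.normSq (moeb z w) := by
    rw [← Complex.sq_norm, ← Complex.sq_norm]
    exact pow_le_pow_left₀ (norm_nonneg _) h 2
  have := sub_le_sub_left h2 1
  rwa [one_sub_normSq_moeb hz hw, one_sub_normSq_moeb hfz hfw] at this

lemma mem_unitDisc {z : ℂ} : z ∈ unitDisc ↔ ‖z‖ < 1 := Iff.rfl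
lemma unitDisc_eq : unitDisc = Metric.ball (0:ℂ) 1 := by
  ext z; simp [unitDisc, Metric.mem_ball, Complex.dist_eq]

lemma normSq_lt_one {z : ℂ} (hz : ‖z‖ < 1) : Complex.normSq z < 1 := by
  rw [← Complex.sq_norm]; nlinarith [norm_nonneg z]

lemma aux_den_pos {a z : ℂ} (ha : ‖a‖ < 1) (hz : ‖z‖ ≤ 1) :
    0 < Complex.normSq (1 - (starRingEnd ℂ) a * z) := by
  rw [Complex.normSq_pos]
  intro h
  have h2 : (1:ℂ) = (starRingEnd ℂ) a * z := by linear_combination h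
  have : ‖(starRingEnd ℂ) a * z‖ < 1 := by
    rw [norm_mul, Complex.norm_conj]
    nlinarith [norm_nonneg a, norm_nonneg z]
  rw [← h2] at this; simp at this

lemma normSq_one_sub_conj_mul {τ z : ℂ} (hτ : ‖τ‖ = 1) :
    Complex.normSq (1 - (starRingEnd ℂ) z * τ) = Complex.normSq (τ - z) := by
  have h1 : Complex.normSq τ = 1 := by rw [← Complex.sq_norm, hτ]; norm_num
  have hττ : τ * (starRingEnd ℂ) τ = (1:ℂ) := by
    rw [Complex.mul_conj, h1]; norm_num
  have key : (τ - z) * (starRingEnd ℂ) τ = (starRingEnd ℂ) (1 - (starRingEnd ℂ) z * τ) := by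
    rw [map_sub, map_one, map_mul, Complex.conj_conj, sub_mul, hττ]
  have := congrArg Complex.normSq key
  rw [map_mul, Complex.normSq_conj, Complex.normSq_conj, h1, mul_one] at this
  exact this.symm

lemma arith_step {N1 N2 D1 D2 B1 B2 β : ℝ} (hD1 : 0 < D1) (hD2 : 0 < D2) (hB2 : 0 < B2)
    (hKI : N1*B1*D2 ≤ N2*B2*D1) (hβ : β*B2 ≤ B1) (hN1 : 0 ≤ N1) :
    N1*β*D2 ≤ N2*D1 := by
  have h5 : N1*D2*(β*B2) ≤ N1*D2*B1 :=
    mul_le_mul_of_nonneg_left hβ (mul_nonneg hN1 hD2.le)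
  have key : (N1*β*D2)*B2 ≤ (N2*D1)*B2 := by nlinarith
  exact le_of_mul_le_mul_right key hB2

/-- **Julia's lemma along the semigroup.** -/
lemma julia (φ : ℝ → ℂ → ℂ) (τ : ℂ) (hφ : IsNonElliptic φ) (hτ : IsDenjoyWolff φ τ)
    (s : ℝ) (hs : 0 ≤ s) (z : ℂ) (hz : ‖z‖ < 1) :
    (1 - Complex.normSq z) / Complex.normSq (τ - z)
      ≤ (1 - Complex.normSq (φ s z)) / Complex.normSq (τ - φ s z) := by
  rcases eq_or_lt_of_le hs with rfl|hspos
  · rw [hφ.id0 z hz]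
  have h0 : (0:ℂ) ∈ unitDisc := by simp [mem_unitDisc]
  have hd : DifferentiableOn ℂ (φ s) (ball 0 1) := by
    rw [← unitDisc_eq]; exact hφ.holo s hs
  have hmf : Set.MapsTo (φ s) (ball 0 1) (ball 0 1) := by
    rw [← unitDisc_eq]; exact hφ.mapsTo s hs
  have hfz : ‖φ s z‖ < 1 := hφ.mapsTo s hs hz
  set Z : ℕ → ℂ := fun n => φ ((n:ℝ) * s) 0 with hZ
  have hZmem : ∀ n : ℕ, ‖Z n‖ < 1 := fun n =>
    hφ.mapsTo _ (by positivity) h0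
  have hZτ : Tendsto Z atTop (𝓝 τ) := by
    have h1 : Tendsto (fun n : ℕ => (n:ℝ) * s) atTop atTop :=
      tendsto_natCast_atTop_atTop.atTop_mul_const hspos
    exact (hτ.2 0 h0).comp h1
  have hZsucc : ∀ n : ℕ, Z (n+1) = φ s (Z n) := by
    intro n
    have e : (((n+1) : ℕ):ℝ) * s = s + (n:ℝ)*s := by push_cast; ring
    show φ ((((n+1) : ℕ):ℝ) * s) 0 = φ s (φ ((n:ℝ)*s) 0)
    rw [e]
    exact hφ.comp ((n:ℝ)*s) s (by positivity) hs 0 h0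
  set b : ℕ → ℝ := fun n => 1 - ‖Z n‖ with hb
  have hbpos : ∀ n, 0 < b n := fun n => by
    have := hZmem n; simp only [hb]; linarith
  have hble : ∀ n, b n ≤ 1 := fun n => by
    have := norm_nonneg (Z n); simp only [hb]; linarith
  have hb0 : Tendsto b atTop (𝓝 0) := by
    have h1 : Tendsto (fun n => ‖Z n‖) atTop (𝓝 (‖τ‖)) :=
      (continuous_norm.tendsto τ).comp hZτ
    rw [hτ.1] at h1
    have h2 := h1.const_sub 1
    simpa using h2
  have hfreq : ∀ k : ℕ, ∃ n, k ≤ n ∧ b (n+1) ≤ (1 + 1/((k:ℝ)+1)) * b n := by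
    intro k
    by_contra hcon
    push_neg at hcon
    have hε0 : 0 < 1/((k:ℝ)+1) := by positivity
    set ε := 1/((k:ℝ)+1) with hε
    have hgrow : ∀ j : ℕ, (1+ε)^j * b k ≤ b (k + j) := by
      intro j
      induction j with
      | zero => simp
      | succ j ih =>
        have h1 := hcon (k+j) (Nat.le_add_right _ _)
        have h2 : (1+ε)^(j+1) * b k = (1+ε) * ((1+ε)^j * b k) := by ring
        have h3 : (1+ε) * ((1+ε)^j * b k) ≤ (1+ε) * b (k+j) := by nlinarith
        have h4 : k + (j+1) = (k+j) + 1 := by omega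
        rw [h2, h4]
        linarith
    have htop : Tendsto (fun j : ℕ => (1+ε)^j * b k) atTop atTop :=
      (tendsto_pow_atTop_atTop_of_one_lt (by linarith)).atTop_mul_const (hbpos k)
    obtain ⟨j, hj⟩ := (htop.eventually_gt_atTop 1).exists
    have := (hgrow j).trans (hble (k+j))
    linarith
  choose m hm1 hm2 using hfreq
  have hmtop : Tendsto m atTop atTop := tendsto_atTop_mono hm1 tendsto_id
  have hKI : ∀ n : ℕ,
      (1 - Complex.normSq z) * (1 - Complex.normSq (Z n))
          / Complex.normSq (1 - (starRingEnd ℂ) z * Z n)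
        ≤ (1 - Complex.normSq (φ s z)) * (1 - Complex.normSq (Z (n+1)))
          / Complex.normSq (1 - (starRingEnd ℂ) (φ s z) * Z (n+1)) := by
    intro n
    have h := schwarz_pick_normSq hd hmf hz (hZmem n)
    rwa [← hZsucc n] at h
  set F : ℕ → ℝ := fun k =>
    (1 - Complex.normSq (φ s z)) / Complex.normSq (1 - (starRingEnd ℂ) (φ s z) * Z (m k + 1))
    with hF
  set H : ℕ → ℝ := fun k =>
    (1 - Complex.normSq z) * ((2 - b (m k)) / ((1 + 1/((k:ℝ)+1)) * (2 - b (m k + 1))))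
      / Complex.normSq (1 - (starRingEnd ℂ) z * Z (m k)) with hH
  have hZm : Tendsto (fun k => Z (m k)) atTop (𝓝 τ) := hZτ.comp hmtop
  have hZm1 : Tendsto (fun k => Z (m k + 1)) atTop (𝓝 τ) :=
    hZτ.comp ((tendsto_add_atTop_nat 1).comp hmtop)
  have hcontden : ∀ w : ℂ, Continuous (fun u : ℂ => Complex.normSq (1 - (starRingEnd ℂ) w * u)) :=
    fun w => Complex.continuous_normSq.comp (continuous_const.sub (continuous_const.mul continuous_id))
  have hFlim : Tendsto F atTop
      (𝓝 ((1 - Complex.normSq (φ s z)) / Complex.normSq (1 - (starRingEnd ℂ) (φ s z) * τ))) := by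
    have hden : Tendsto (fun k => Complex.normSq (1 - (starRingEnd ℂ) (φ s z) * Z (m k + 1)))
        atTop (𝓝 (Complex.normSq (1 - (starRingEnd ℂ) (φ s z) * τ))) :=
      ((hcontden (φ s z)).tendsto τ).comp hZm1
    exact tendsto_const_nhds.div hden (ne_of_gt (aux_den_pos hfz hτ.1.le))
  have hHlim : Tendsto H atTop
      (𝓝 ((1 - Complex.normSq z) / Complex.normSq (1 - (starRingEnd ℂ) z * τ))) := by
    have hbm : Tendsto (fun k => b (m k)) atTop (𝓝 0) := hb0.comp hmtop
    have hbm1 : Tendsto (fun k => b (m k + 1)) atTop (𝓝 0) :=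
      hb0.comp ((tendsto_add_atTop_nat 1).comp hmtop)
    have hek : Tendsto (fun k : ℕ => 1/((k:ℝ)+1)) atTop (𝓝 0) :=
      tendsto_one_div_add_atTop_nhds_zero_nat
    have hβ : Tendsto (fun k => (2 - b (m k)) / ((1 + 1/((k:ℝ)+1)) * (2 - b (m k + 1))))
        atTop (𝓝 1) := by
      have h2 : Tendsto (fun k => (2 - b (m k)) / ((1 + 1/((k:ℝ)+1)) * (2 - b (m k + 1))))
          atTop (𝓝 ((2 - 0) / ((1 + 0) * (2 - 0)))) :=
        (tendsto_const_nhds.sub hbm).div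
          ((tendsto_const_nhds.add hek).mul (tendsto_const_nhds.sub hbm1)) (by norm_num)
      have h3 : ((2:ℝ) - 0) / ((1 + 0) * (2 - 0)) = 1 := by norm_num
      rw [h3] at h2
      exact h2
    have hden : Tendsto (fun k => Complex.normSq (1 - (starRingEnd ℂ) z * Z (m k)))
        atTop (𝓝 (Complex.normSq (1 - (starRingEnd ℂ) z * τ))) :=
      ((hcontden z).tendsto τ).comp hZm
    have h3 : Tendsto (fun k => (1 - Complex.normSq z)
          * ((2 - b (m k)) / ((1 + 1/((k:ℝ)+1)) * (2 - b (m k + 1))))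
          / Complex.normSq (1 - (starRingEnd ℂ) z * Z (m k))) atTop
        (𝓝 ((1 - Complex.normSq z) * 1 / Complex.normSq (1 - (starRingEnd ℂ) z * τ))) :=
      (hβ.const_mul (1 - Complex.normSq z)).div hden (ne_of_gt (aux_den_pos hz hτ.1.le))
    rw [mul_one] at h3
    exact h3
  have hHF : ∀ k : ℕ, H k ≤ F k := by
    intro k
    have hεk : 0 < 1/((k:ℝ)+1) := by positivity
    set ε := 1/((k:ℝ)+1)
    set n := m k with hn
    have hD1 : 0 < Complex.normSq (1 - (starRingEnd ℂ) z * Z n) := aux_den_pos hz (hZmem n).le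
    have hD2 : 0 < Complex.normSq (1 - (starRingEnd ℂ) (φ s z) * Z (n+1)) :=
      aux_den_pos hfz (hZmem (n+1)).le
    have hN1 : 0 < 1 - Complex.normSq z := by have := normSq_lt_one hz; linarith
    have hN2 : 0 < 1 - Complex.normSq (φ s z) := by have := normSq_lt_one hfz; linarith
    have eB1 : 1 - Complex.normSq (Z n) = b n * (2 - b n) := by
      rw [← Complex.sq_norm]
      have : ‖Z n‖ = 1 - b n := by simp [hb]
      rw [this]; ring
    have eB2 : 1 - Complex.normSq (Z (n+1)) = b (n+1) * (2 - b (n+1)) := by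
      rw [← Complex.sq_norm]
      have : ‖Z (n+1)‖ = 1 - b (n+1) := by simp [hb]
      rw [this]; ring
    have hB1 : 0 < b n * (2 - b n) := by
      have := hbpos n; have := hble n; nlinarith
    have hB2 : 0 < b (n+1) * (2 - b (n+1)) := by
      have := hbpos (n+1); have := hble (n+1); nlinarith
    have hKIn := hKI n
    rw [eB1, eB2] at hKIn
    rw [div_le_div_iff₀ (by positivity) hD2] at hKIn
    show (1 - Complex.normSq z) * ((2 - b n) / ((1 + ε) * (2 - b (n+1))))
        / Complex.normSq (1 - (starRingEnd ℂ) z * Z n)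
      ≤ (1 - Complex.normSq (φ s z)) / Complex.normSq (1 - (starRingEnd ℂ) (φ s z) * Z (n+1))
    rw [div_le_div_iff₀ hD1 hD2]
    have hratio : b (n+1) ≤ (1 + ε) * b n := hm2 k
    have hden2 : 0 < (1 + ε) * (2 - b (n+1)) := by
      have := hbpos (n+1); have := hble (n+1); nlinarith
    have hβB2 : ((2 - b n) / ((1 + ε) * (2 - b (n+1)))) * (b (n+1) * (2 - b (n+1))) ≤ b n * (2 - b n) := by
      rw [div_mul_eq_mul_div, div_le_iff₀ hden2]
      have h1 : 0 < 2 - b n := by have := hble n; linarith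
      have h2 : 0 < 2 - b (n+1) := by have := hble (n+1); linarith
      nlinarith [mul_le_mul_of_nonneg_left hratio (mul_nonneg h1.le h2.le)]
    exact arith_step hD1 hD2 hB2 hKIn hβB2 hN1.le
  have hfin := le_of_tendsto_of_tendsto' hHlim hFlim hHF
  rwa [normSq_one_sub_conj_mul hτ.1, normSq_one_sub_conj_mul hτ.1] at hfin

def cOf (z τ : ℂ) : ℝ := ((starRingEnd ℂ) z * τ).re
def rhoOf (z τ : ℂ) : ℝ :=
  Real.sqrt ((1 + Complex.normSq z + 2 * cOf z τ) / (1 + Complex.normSq z - 2 * cOf z τ))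
def rStar (z τ : ℂ) : ℝ := (rhoOf z τ - 1) / (rhoOf z τ + 1)

lemma abs_cOf_le {z τ : ℂ} (hτ : ‖τ‖ = 1) : |cOf z τ| ≤ ‖z‖ := by
  have h := Complex.abs_re_le_norm ((starRingEnd ℂ) z * τ)
  rwa [norm_mul, Complex.norm_conj, hτ, mul_one] at h

lemma Q_pos {z τ : ℂ} (hτ : ‖τ‖ = 1) (hz : ‖z‖ < 1) :
    0 < 1 + Complex.normSq z - 2 * cOf z τ := by
  have h := abs_cOf_le (z := z) hτ
  have h2 : Complex.normSq z = ‖z‖ ^ 2 := (Complex.sq_norm z).symm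
  have := norm_nonneg z
  rw [abs_le] at h
  nlinarith [h.1, h.2]

lemma P_pos {z τ : ℂ} (hτ : ‖τ‖ = 1) (hz : ‖z‖ < 1) :
    0 < 1 + Complex.normSq z + 2 * cOf z τ := by
  have h := abs_cOf_le (z := z) hτ
  have h2 : Complex.normSq z = ‖z‖ ^ 2 := (Complex.sq_norm z).symm
  have := norm_nonneg z
  rw [abs_le] at h
  nlinarith [h.1, h.2]

lemma rho_pos {z τ : ℂ} (hτ : ‖τ‖ = 1) (hz : ‖z‖ < 1) :
    0 < rhoOf z τ :=
  Real.sqrt_pos.2 (div_pos (P_pos hτ hz) (Q_pos hτ hz))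

lemma rho_sq {z τ : ℂ} (hτ : ‖τ‖ = 1) (hz : ‖z‖ < 1) :
    rhoOf z τ ^ 2 * (1 + Complex.normSq z - 2 * cOf z τ)
      = 1 + Complex.normSq z + 2 * cOf z τ := by
  have h1 : rhoOf z τ ^ 2
      = (1 + Complex.normSq z + 2 * cOf z τ) / (1 + Complex.normSq z - 2 * cOf z τ) :=
    Real.sq_sqrt (le_of_lt (div_pos (P_pos hτ hz) (Q_pos hτ hz)))
  rw [h1, div_mul_cancel₀]
  exact (Q_pos hτ hz).ne'

lemma rStar_mem {z τ : ℂ} (hτ : ‖τ‖ = 1) (hz : ‖z‖ < 1) :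
    rStar z τ ∈ Set.Ioo (-1:ℝ) 1 := by
  have h := rho_pos hτ hz
  constructor
  · rw [rStar, lt_div_iff₀ (by linarith)]; linarith
  · rw [rStar, div_lt_one (by linarith)]; linarith

lemma hE {z τ : ℂ} (hτ : ‖τ‖ = 1) (hz : ‖z‖ < 1) :
    cOf z τ * (1 + rStar z τ ^ 2) = rStar z τ * (1 + Complex.normSq z) := by
  have hρ := rho_pos hτ hz
  have hsq := rho_sq hτ hz
  rw [rStar]
  have h1 : rhoOf z τ + 1 ≠ 0 := by linarith
  field_simp
  ring_nf
  nlinarith [hsq]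

lemma normSq_tau_one {τ : ℂ} (hτ : ‖τ‖ = 1) : Complex.normSq τ = 1 := by
  rw [← Complex.sq_norm, hτ]; norm_num

lemma normSq_sub_r (z τ : ℂ) (r : ℝ) :
    Complex.normSq (z - (r:ℂ) * τ)
      = Complex.normSq z - 2 * r * cOf z τ + r ^ 2 * Complex.normSq τ := by
  simp [Complex.normSq_apply, cOf, Complex.sub_re, Complex.sub_im, Complex.mul_re, Complex.mul_im,
    Complex.conj_re, Complex.conj_im, Complex.ofReal_re, Complex.ofReal_im]
  ring

lemma normSq_one_sub_r (z τ : ℂ) (r : ℝ) :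
    Complex.normSq (1 - (starRingEnd ℂ) z * ((r:ℂ) * τ))
      = 1 - 2 * r * cOf z τ + r ^ 2 * (Complex.normSq z * Complex.normSq τ) := by
  simp [Complex.normSq_apply, cOf, Complex.sub_re, Complex.sub_im, Complex.mul_re, Complex.mul_im,
    Complex.conj_re, Complex.conj_im, Complex.ofReal_re, Complex.ofReal_im, Complex.one_re,
    Complex.one_im]
  ring

lemma abs_r_tau_lt_one {τ : ℂ} (hτ : ‖τ‖ = 1) {r : ℝ} (hr : r ∈ Set.Ioo (-1:ℝ) 1) :
    ‖(r:ℂ) * τ‖ < 1 := by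
  rw [norm_mul, Complex.norm_real, Real.norm_eq_abs, hτ, mul_one]
  rw [abs_lt]; exact ⟨hr.1, hr.2⟩

lemma kD_rStar_lt {z τ : ℂ} (hτ : ‖τ‖ = 1) (hz : ‖z‖ < 1)
    {r : ℝ} (hr : r ∈ Set.Ioo (-1:ℝ) 1) (hne : r ≠ rStar z τ) :
    kD z ((rStar z τ : ℂ) * τ) < kD z ((r:ℂ) * τ) := by
  set rs := rStar z τ with hrs
  have hrsm := rStar_mem hτ hz
  have hτ1 := normSq_tau_one hτ
  set a2 := Complex.normSq z with ha2
  set c := cOf z τ with hc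
  have ha2lt : a2 < 1 := normSq_lt_one hz
  have ha2nn : 0 ≤ a2 := Complex.normSq_nonneg z
  have hD1 : 0 < Complex.normSq (1 - (starRingEnd ℂ) z * ((rs:ℂ) * τ)) :=
    aux_den_pos hz (abs_r_tau_lt_one hτ hrsm).le
  have hD2 : 0 < Complex.normSq (1 - (starRingEnd ℂ) z * ((r:ℂ) * τ)) :=
    aux_den_pos hz (abs_r_tau_lt_one hτ hr).le
  have hEq := hE hτ hz
  rw [← hrs, ← hc, ← ha2] at hEq
  -- key polynomial inequality
  have key : Complex.normSq (z - (rs:ℂ) * τ) * Complex.normSq (1 - (starRingEnd ℂ) z * ((r:ℂ) * τ))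
      < Complex.normSq (z - (r:ℂ) * τ) * Complex.normSq (1 - (starRingEnd ℂ) z * ((rs:ℂ) * τ)) := by
    rw [normSq_sub_r, normSq_sub_r, normSq_one_sub_r, normSq_one_sub_r, hτ1, ← ha2, ← hc]
    have hident : (1 + rs^2) * ((a2 - 2*r*c + r^2) * (1 - 2*rs*c + rs^2*(a2*1))
          - (a2 - 2*rs*c + rs^2) * (1 - 2*r*c + r^2*(a2*1)))
        = (1 - a2) * (1 + a2) * (1 - rs^2) * (rs - r)^2 := by
      linear_combination (2*(1 - a2)*(rs - r)*(1 + r*rs)) * hEq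
    have hrs2 : rs^2 < 1 := by nlinarith [hrsm.1, hrsm.2]
    have hpos : 0 < (1 - a2) * (1 + a2) * (1 - rs^2) * (rs - r)^2 := by
      have h5 : rs - r ≠ 0 := sub_ne_zero.2 (Ne.symm hne)
      have h6 : 0 < (rs - r)^2 := lt_of_le_of_ne (sq_nonneg _) (Ne.symm (pow_ne_zero 2 h5))
      have h7 : (0:ℝ) < 1 - a2 := by linarith
      have h8 : (0:ℝ) < 1 + a2 := by linarith
      have h9 : (0:ℝ) < 1 - rs^2 := by linarith
      exact mul_pos (mul_pos (mul_pos h7 h8) h9) h6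
    nlinarith [hident, hpos]
  -- convert to abs inequality
  have habs : ‖(z - (rs:ℂ)*τ) / (1 - (starRingEnd ℂ) z * ((rs:ℂ)*τ))‖
      < ‖(z - (r:ℂ)*τ) / (1 - (starRingEnd ℂ) z * ((r:ℂ)*τ))‖ := by
    have h1 : Complex.normSq ((z - (rs:ℂ)*τ) / (1 - (starRingEnd ℂ) z * ((rs:ℂ)*τ)))
        < Complex.normSq ((z - (r:ℂ)*τ) / (1 - (starRingEnd ℂ) z * ((r:ℂ)*τ))) := by
      rw [Complex.normSq_div, Complex.normSq_div, div_lt_div_iff₀ hD1 hD2]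
      exact key
    rw [← Complex.sq_norm, ← Complex.sq_norm] at h1
    have := norm_nonneg ((z - (rs:ℂ)*τ) / (1 - (starRingEnd ℂ) z * ((rs:ℂ)*τ)))
    have := norm_nonneg ((z - (r:ℂ)*τ) / (1 - (starRingEnd ℂ) z * ((r:ℂ)*τ)))
    nlinarith
  have hlt1 : ‖(z - (r:ℂ)*τ) / (1 - (starRingEnd ℂ) z * ((r:ℂ)*τ))‖ < 1 := by
    rw [norm_div, div_lt_one]
    · have h2 : Complex.normSq (z - (r:ℂ)*τ) < Complex.normSq (1 - (starRingEnd ℂ) z * ((r:ℂ)*τ)) := by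
        rw [normSq_sub_r, normSq_one_sub_r, hτ1, ← ha2, ← hc]
        have hr2 : r^2 < 1 := by nlinarith [hr.1, hr.2]
        nlinarith
      have h3 := Complex.sq_norm (z - (r:ℂ)*τ)
      have h4 := Complex.sq_norm (1 - (starRingEnd ℂ) z * ((r:ℂ)*τ))
      nlinarith [norm_nonneg (z - (r:ℂ)*τ),
        norm_nonneg (1 - (starRingEnd ℂ) z * ((r:ℂ)*τ)), hD2]
    · have := hD2
      rw [Complex.normSq_pos] at this
      exact norm_pos_iff.2 this
  exact arctanh_lt_arctanh (norm_nonneg _) habs hlt1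

lemma normSq_tau_sub (τ z : ℂ) :
    Complex.normSq (τ - z) = Complex.normSq τ + Complex.normSq z - 2 * cOf z τ := by
  simp [Complex.normSq_apply, cOf, Complex.sub_re, Complex.sub_im, Complex.mul_re, Complex.mul_im,
    Complex.conj_re, Complex.conj_im]
  ring

lemma kD_zero_left (w : ℂ) : kD 0 w = arctanh (‖w‖) := by
  simp [kD]

lemma abs_r_tau {τ : ℂ} (hτ : ‖τ‖ = 1) (r : ℝ) :
    ‖(r:ℂ) * τ‖ = |r| := by
  rw [norm_mul, Complex.norm_real, Real.norm_eq_abs, hτ, mul_one]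

/-- evaluation of the orthogonal speed -/
lemma orth_eval {τ : ℂ} {p : ℂ → ℂ} (hτ1 : ‖τ‖ = 1) (hp : IsOrthProjection τ p)
    {z : ℂ} (hz : ‖z‖ < 1) :
    kD 0 (p z) = arctanh (|rStar z τ|) := by
  obtain ⟨⟨r₀, hr₀m, hpz⟩, hmin⟩ := hp z hz
  have hr0 : r₀ = rStar z τ := by
    by_contra hne
    have h1 := hmin (rStar z τ) (rStar_mem hτ1 hz)
    rw [hpz] at h1
    have h2 := kD_rStar_lt hτ1 hz hr₀m hne
    linarith
  rw [hpz, hr0, kD_zero_left, abs_r_tau hτ1]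


end auxJulia

set_option maxHeartbeats 1000000 in
/-- **Lemma 3.2:** if the total speed does not decrease from `t₁` to `t₂`, neither does
the orthogonal speed. -/
theorem orthSpeed_le_of_totalSpeed_le
    (φ : ℝ → ℂ → ℂ) (τ : ℂ) (p : ℂ → ℂ)
    (hφ : IsNonElliptic φ) (hτ : IsDenjoyWolff φ τ) (hp : IsOrthProjection τ p)
    (t₁ t₂ : ℝ) (ht₁ : 0 ≤ t₁) (ht : t₁ ≤ t₂)
    (hv : totalSpeed φ t₁ ≤ totalSpeed φ t₂) :
    orthSpeed φ p t₁ ≤ orthSpeed φ p t₂ := by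
  have h0 : (0:ℂ) ∈ unitDisc := by simp [unitDisc]
  have ht₂ : 0 ≤ t₂ := le_trans ht₁ ht
  set z₁ := φ t₁ 0 with hz1d
  set z₂ := φ t₂ 0 with hz2d
  have hz1 : ‖z₁‖ < 1 := hφ.mapsTo t₁ ht₁ h0
  have hz2 : ‖z₂‖ < 1 := hφ.mapsTo t₂ ht₂ h0
  have hτ1 := hτ.1
  have hτnsq := normSq_tau_one hτ1
  -- total speed gives |z₁| ≤ |z₂|
  have hv' : arctanh (‖z₁‖) ≤ arctanh (‖z₂‖) := by
    have e1 : totalSpeed φ t₁ = arctanh (‖z₁‖) := kD_zero_left z₁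
    have e2 : totalSpeed φ t₂ = arctanh (‖z₂‖) := kD_zero_left z₂
    rwa [e1, e2] at hv
  have habs : ‖z₁‖ ≤ ‖z₂‖ :=
    le_of_arctanh_le (norm_nonneg _) (norm_nonneg _) hz1 hv'
  set a1 := Complex.normSq z₁ with ha1
  set a2 := Complex.normSq z₂ with ha2
  have ha12 : a1 ≤ a2 := by
    rw [ha1, ha2, ← Complex.sq_norm, ← Complex.sq_norm]
    exact pow_le_pow_left₀ (norm_nonneg _) habs 2
  have ha1nn : 0 ≤ a1 := Complex.normSq_nonneg _
  have ha1lt : a1 < 1 := normSq_lt_one hz1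
  have ha2lt : a2 < 1 := normSq_lt_one hz2
  set c1 := cOf z₁ τ with hc1
  set c2 := cOf z₂ τ with hc2
  set Q1 := 1 + a1 - 2 * c1 with hQ1
  set Q2 := 1 + a2 - 2 * c2 with hQ2
  have hQ1pos : 0 < Q1 := Q_pos hτ1 hz1
  have hQ2pos : 0 < Q2 := Q_pos hτ1 hz2
  have hnsq1 : Complex.normSq (τ - z₁) = Q1 := by
    rw [normSq_tau_sub, hτnsq]
  have hnsq2 : Complex.normSq (τ - z₂) = Q2 := by
    rw [normSq_tau_sub, hτnsq]
  -- Julia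
  have hA1 : 1 ≤ (1 - a1) / Q1 := by
    have h := julia φ τ hφ hτ t₁ ht₁ 0 (by norm_num)
    simp only [map_zero, sub_zero, hτnsq] at h
    rw [hnsq1] at h
    simpa using h
  have hA12 : (1 - a1) / Q1 ≤ (1 - a2) / Q2 := by
    have hcomp : z₂ = φ (t₂ - t₁) z₁ := by
      rw [hz1d, hz2d, ← hφ.comp t₁ (t₂ - t₁) ht₁ (by linarith) 0 h0]
      congr 1; ring
    have h := julia φ τ hφ hτ (t₂ - t₁) (by linarith) z₁ hz1
    rw [← hcomp] at h
    rwa [hnsq1, hnsq2] at h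
  -- G chain
  have hF1 : (1:ℝ) ≤ (1 + a1) / (1 - a1) := by
    rw [le_div_iff₀ (by linarith)]; linarith
  have hF12 : (1 + a1) / (1 - a1) ≤ (1 + a2) / (1 - a2) := by
    rw [div_le_div_iff₀ (by linarith) (by linarith)]; nlinarith
  have hGsplit1 : ((1 + a1)/(1 - a1)) * ((1 - a1)/Q1) = (1 + a1) / Q1 := by
    rw [div_mul_div_comm, mul_comm (1 + a1) (1 - a1),
      mul_div_mul_left _ _ (ne_of_gt (by linarith : (0:ℝ) < 1 - a1))]
  have hGsplit2 : ((1 + a2)/(1 - a2)) * ((1 - a2)/Q2) = (1 + a2) / Q2 := by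
    rw [div_mul_div_comm, mul_comm (1 + a2) (1 - a2),
      mul_div_mul_left _ _ (ne_of_gt (by linarith : (0:ℝ) < 1 - a2))]
  have hG1 : 1 ≤ (1 + a1) / Q1 := by
    rw [← hGsplit1]
    nlinarith
  have hG12 : (1 + a1) / Q1 ≤ (1 + a2) / Q2 := by
    rw [← hGsplit1, ← hGsplit2]
    have h1 : (0:ℝ) ≤ (1 - a1)/Q1 := by apply div_nonneg <;> linarith
    have h2 : (0:ℝ) ≤ (1 + a2)/(1 - a2) := by apply div_nonneg <;> linarith
    nlinarith
  -- rho chain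
  have hPQ1 : (1 + a1 + 2*c1) / Q1 = 2 * ((1 + a1) / Q1) - 1 := by
    field_simp; rw [hQ1]; ring
  have hPQ2 : (1 + a2 + 2*c2) / Q2 = 2 * ((1 + a2) / Q2) - 1 := by
    field_simp; rw [hQ2]; ring
  have hrho1 : rhoOf z₁ τ = Real.sqrt ((1 + a1 + 2*c1)/Q1) := rfl
  have hrho2 : rhoOf z₂ τ = Real.sqrt ((1 + a2 + 2*c2)/Q2) := rfl
  have hrho1ge : 1 ≤ rhoOf z₁ τ := by
    rw [hrho1]
    have h := Real.sqrt_le_sqrt (show (1:ℝ) ≤ (1 + a1 + 2*c1)/Q1 by rw [hPQ1]; linarith)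
    rwa [Real.sqrt_one] at h
  have hrho12 : rhoOf z₁ τ ≤ rhoOf z₂ τ := by
    rw [hrho1, hrho2]
    apply Real.sqrt_le_sqrt
    rw [hPQ1, hPQ2]; linarith
  -- rStar chain
  have hr1nn : 0 ≤ rStar z₁ τ := by
    rw [rStar]
    apply div_nonneg <;> linarith
  have hr2nn : 0 ≤ rStar z₂ τ := by
    rw [rStar]
    apply div_nonneg <;> linarith
  have hr12 : rStar z₁ τ ≤ rStar z₂ τ := by
    rw [rStar, rStar, div_le_div_iff₀ (by linarith) (by linarith)]
    nlinarith
  have hr2lt : rStar z₂ τ < 1 := (rStar_mem hτ1 hz2).2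
  -- conclude
  have e1 : orthSpeed φ p t₁ = arctanh (|rStar z₁ τ|) := orth_eval hτ1 hp hz1
  have e2 : orthSpeed φ p t₂ = arctanh (|rStar z₂ τ|) := orth_eval hτ1 hp hz2
  rw [e1, e2, _root_.abs_of_nonneg hr1nn, _root_.abs_of_nonneg hr2nn]
  exact arctanh_le_arctanh hr1nn hr12 hr2lt

end
end
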